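/- arXiv:2504.06054 — 2 statements merged into one kernel-verified Lean document; each statement's English description precedes it below -/
import Mathlib

section
/- Let Γ be a group generated by a finite set S, and for a function L : Γ → ℝ define δL(a,b) = L(ab) - L(a) - L(b) and the norm ‖L‖_S = sup_{s ∈ S ∪ {1}} |L(s)| + sup_{a,b ∈ Γ} |δL(a,b)|. Then ‖·‖_S is a norm on the space QM(Γ) of quasimorphisms (functions with sup|δL| < ∞), and (QM(Γ), ‖·‖_S) is a Banach space. -/
/-- A quasimorphism: a real-valued function on a group with uniformly bounded defect. -/
def IsQuasimorphism {Γ : Type*} [Group Γ] (L : Γ → ℝ) : Prop :=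
  ∃ C : ℝ, ∀ g h : Γ, |L (g * h) - L g - L h| ≤ C

/-- The defect seminorm `‖δL‖ = sup_{a,b} |L(ab) - L(a) - L(b)|`. -/
noncomputable def qmDefect {Γ : Type*} [Group Γ] (L : Γ → ℝ) : ℝ :=
  ⨆ p : Γ × Γ, |L (p.1 * p.2) - L p.1 - L p.2|

/-- The norm `‖L‖_S = sup_{s ∈ S ∪ {1}} |L(s)| + ‖δL‖`. -/
noncomputable def qmNorm {Γ : Type*} [Group Γ] (S : Finset Γ) (L : Γ → ℝ) : ℝ :=
  (⨆ s ∈ insert (1 : Γ) (S : Set Γ), |L s|) + qmDefect L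

section helpers

variable {Γ : Type*} [Group Γ]

/-- The sup over generators part of the norm. -/
noncomputable def bSup (S : Finset Γ) (L : Γ → ℝ) : ℝ :=
  ⨆ s ∈ insert (1 : Γ) (S : Set Γ), |L s|

lemma qmNorm_eq (S : Finset Γ) (L : Γ → ℝ) : qmNorm S L = bSup S L + qmDefect L := rfl

lemma qm_bdd {L : Γ → ℝ} (h : IsQuasimorphism L) :
    BddAbove (Set.range fun p : Γ × Γ => |L (p.1 * p.2) - L p.1 - L p.2|) := by
  obtain ⟨C, hC⟩ := h
  exact ⟨C, by rintro x ⟨p, rfl⟩; exact hC p.1 p.2⟩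

lemma qmDefect_nonneg (L : Γ → ℝ) : 0 ≤ qmDefect L :=
  Real.iSup_nonneg fun _ => abs_nonneg _

lemma abs_le_qmDefect {L : Γ → ℝ} (h : IsQuasimorphism L) (a b : Γ) :
    |L (a * b) - L a - L b| ≤ qmDefect L :=
  le_ciSup (qm_bdd h) (a, b)

lemma qmDefect_le {L : Γ → ℝ} {m : ℝ} (hm : 0 ≤ m)
    (h : ∀ a b, |L (a * b) - L a - L b| ≤ m) : qmDefect L ≤ m :=
  Real.iSup_le (fun p => h p.1 p.2) hm

lemma bSup_nonneg (S : Finset Γ) (L : Γ → ℝ) : 0 ≤ bSup S L :=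
  Real.iSup_nonneg fun _ => Real.iSup_nonneg fun _ => abs_nonneg _

lemma bSup_le {S : Finset Γ} {L : Γ → ℝ} {m : ℝ} (hm : 0 ≤ m)
    (h : ∀ s ∈ insert (1 : Γ) (S : Set Γ), |L s| ≤ m) : bSup S L ≤ m :=
  Real.iSup_le (fun s => Real.iSup_le (fun hs => h s hs) hm) hm

lemma le_bSup {S : Finset Γ} (L : Γ → ℝ) {s : Γ}
    (hs : s ∈ insert (1 : Γ) (S : Set Γ)) : |L s| ≤ bSup S L := by
  classical
  have hne : (insert (1 : Γ) S).Nonempty := ⟨1, Finset.mem_insert_self _ _⟩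
  have hb : BddAbove (Set.range fun t : Γ =>
      ⨆ _ : t ∈ insert (1 : Γ) (S : Set Γ), |L t|) := by
    refine ⟨((insert (1 : Γ) S).sup' hne fun t => |L t|) ⊔ 0, ?_⟩
    rintro x ⟨t, rfl⟩
    dsimp only
    by_cases ht : t ∈ insert (1 : Γ) (S : Set Γ)
    · rw [ciSup_pos (f := fun _ => |L t|) ht]
      have ht' : t ∈ insert (1 : Γ) S := by
        rw [Finset.mem_insert]; simpa using ht
      exact le_sup_of_le_left (Finset.le_sup' (fun t => |L t|) ht')
    · haveI : IsEmpty (t ∈ insert (1 : Γ) (S : Set Γ)) := ⟨fun h => ht h⟩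
      rw [Real.iSup_of_isEmpty]
      exact le_sup_right
  calc |L s| = ⨆ _ : s ∈ insert (1 : Γ) (S : Set Γ), |L s| :=
        (ciSup_pos (f := fun _ => |L s|) hs).symm
    _ ≤ bSup S L := le_ciSup hb s

lemma bSup_le_qmNorm (S : Finset Γ) (L : Γ → ℝ) : bSup S L ≤ qmNorm S L :=
  le_add_of_nonneg_right (qmDefect_nonneg L)

lemma qmDefect_le_qmNorm (S : Finset Γ) (L : Γ → ℝ) : qmDefect L ≤ qmNorm S L :=
  le_add_of_nonneg_left (bSup_nonneg S L)

lemma qmNorm_nonneg (S : Finset Γ) (L : Γ → ℝ) : 0 ≤ qmNorm S L :=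
  add_nonneg (bSup_nonneg S L) (qmDefect_nonneg L)

lemma IsQuasimorphism.sub {L L' : Γ → ℝ} (h : IsQuasimorphism L)
    (h' : IsQuasimorphism L') : IsQuasimorphism (L - L') := by
  obtain ⟨C, hC⟩ := h; obtain ⟨C', hC'⟩ := h'
  refine ⟨C + C', fun g k => ?_⟩
  simp only [Pi.sub_apply]
  have : L (g * k) - L' (g * k) - (L g - L' g) - (L k - L' k)
      = (L (g * k) - L g - L k) - (L' (g * k) - L' g - L' k) := by ring
  rw [this]
  exact (abs_sub _ _).trans (add_le_add (hC g k) (hC' g k))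

/-- Pointwise bound: every element's value is controlled by the norm. -/
lemma point_bound (S : Finset Γ) (hS : Subgroup.closure (S : Set Γ) = ⊤) (g : Γ) :
    ∃ c : ℝ, 0 ≤ c ∧ ∀ L : Γ → ℝ, IsQuasimorphism L → |L g| ≤ c * qmNorm S L := by
  have hg : g ∈ Subgroup.closure (S : Set Γ) := hS ▸ Subgroup.mem_top g
  induction hg using Subgroup.closure_induction with
  | mem x hx =>
    refine ⟨1, zero_le_one, fun L _ => ?_⟩
    rw [one_mul]
    exact (le_bSup L (Set.mem_insert_of_mem _ hx)).trans (bSup_le_qmNorm S L)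
  | one =>
    refine ⟨1, zero_le_one, fun L _ => ?_⟩
    rw [one_mul]
    exact (le_bSup L (Set.mem_insert _ _)).trans (bSup_le_qmNorm S L)
  | mul x y _ _ ihx ihy =>
    obtain ⟨cx, hcx0, hcx⟩ := ihx; obtain ⟨cy, hcy0, hcy⟩ := ihy
    refine ⟨cx + cy + 1, by positivity, fun L hL => ?_⟩
    have hδ : |L (x * y) - L x - L y| ≤ qmNorm S L :=
      (abs_le_qmDefect hL x y).trans (qmDefect_le_qmNorm S L)
    have h1 : |L (x * y)| ≤ |L x| + |L y| + |L (x * y) - L x - L y| := by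
      have e : L (x * y) = L x + L y + (L (x * y) - L x - L y) := by ring
      calc |L (x * y)| = |L x + L y + (L (x * y) - L x - L y)| := congrArg _root_.abs e
        _ ≤ |L x + L y| + |L (x * y) - L x - L y| := abs_add_le _ _
        _ ≤ |L x| + |L y| + |L (x * y) - L x - L y| :=
            add_le_add_left (abs_add_le _ _) _
    calc |L (x * y)| ≤ |L x| + |L y| + |L (x * y) - L x - L y| := h1
      _ ≤ cx * qmNorm S L + cy * qmNorm S L + qmNorm S L :=
          add_le_add (add_le_add (hcx L hL) (hcy L hL)) hδ
      _ = (cx + cy + 1) * qmNorm S L := by ring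
  | inv x _ ihx =>
    obtain ⟨cx, hcx0, hcx⟩ := ihx
    refine ⟨cx + 2, by positivity, fun L hL => ?_⟩
    have hδ : |L (x * x⁻¹) - L x - L x⁻¹| ≤ qmNorm S L :=
      (abs_le_qmDefect hL x x⁻¹).trans (qmDefect_le_qmNorm S L)
    have h1 : |L 1| ≤ qmNorm S L :=
      (le_bSup L (Set.mem_insert _ _)).trans (bSup_le_qmNorm S L)
    have h2 : L x⁻¹ = L 1 - L x - (L (x * x⁻¹) - L x - L x⁻¹) := by
      rw [mul_inv_cancel]; ring
    calc |L x⁻¹| ≤ |L 1| + |L x| + |L (x * x⁻¹) - L x - L x⁻¹| := by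
          calc |L x⁻¹| = |L 1 - L x - (L (x * x⁻¹) - L x - L x⁻¹)| := congrArg _root_.abs h2
            _ ≤ |L 1 - L x| + |L (x * x⁻¹) - L x - L x⁻¹| := abs_sub _ _
            _ ≤ |L 1| + |L x| + |L (x * x⁻¹) - L x - L x⁻¹| :=
                add_le_add_left (abs_sub _ _) _
      _ ≤ qmNorm S L + cx * qmNorm S L + qmNorm S L :=
          add_le_add (add_le_add h1 (hcx L hL)) hδ
      _ = (cx + 2) * qmNorm S L := by ring

end helpers

/-- For a group `Γ` generated by a finite set `S`, `‖·‖_S` is a norm on the space of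
quasimorphisms, and the space of quasimorphisms equipped with it is a Banach space
(norm axioms plus completeness). -/
theorem quasimorphisms_banach {Γ : Type*} [Group Γ] (S : Finset Γ)
    (hS : Subgroup.closure (S : Set Γ) = ⊤) :
    (∀ L : Γ → ℝ, IsQuasimorphism L → 0 ≤ qmNorm S L) ∧
    (∀ L : Γ → ℝ, IsQuasimorphism L → (qmNorm S L = 0 ↔ L = 0)) ∧
    (∀ L L' : Γ → ℝ, IsQuasimorphism L → IsQuasimorphism L' →
      qmNorm S (L + L') ≤ qmNorm S L + qmNorm S L') ∧
    (∀ (c : ℝ) (L : Γ → ℝ), IsQuasimorphism L → qmNorm S (c • L) = |c| * qmNorm S L) ∧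
    (∀ Lseq : ℕ → Γ → ℝ, (∀ k, IsQuasimorphism (Lseq k)) →
      (∀ ε : ℝ, 0 < ε → ∃ N : ℕ, ∀ j k : ℕ, N ≤ j → N ≤ k →
        qmNorm S (Lseq j - Lseq k) ≤ ε) →
      ∃ L : Γ → ℝ, IsQuasimorphism L ∧
        Filter.Tendsto (fun k => qmNorm S (Lseq k - L)) Filter.atTop (nhds 0)) := by
  refine ⟨fun L _ => qmNorm_nonneg S L, ?_, ?_, ?_, ?_⟩
  · -- definiteness
    intro L hL
    constructor
    · intro h0
      have hb : bSup S L = 0 := by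
        have := bSup_nonneg S L; have := qmDefect_nonneg L
        rw [qmNorm_eq] at h0; linarith
      have hd : qmDefect L = 0 := by
        have := bSup_nonneg S L; have := qmDefect_nonneg L
        rw [qmNorm_eq] at h0; linarith
      have hmem : ∀ s ∈ insert (1 : Γ) (S : Set Γ), L s = 0 := by
        intro s hs
        have := (le_bSup L hs).trans_eq hb
        exact abs_eq_zero.mp (le_antisymm this (abs_nonneg _))
      have hadd : ∀ a b : Γ, L (a * b) = L a + L b := by
        intro a b
        have := (abs_le_qmDefect hL a b).trans_eq hd
        have := abs_eq_zero.mp (le_antisymm this (abs_nonneg _))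
        linarith [this]
      funext g
      have hg : g ∈ Subgroup.closure (S : Set Γ) := hS ▸ Subgroup.mem_top g
      show L g = 0
      induction hg using Subgroup.closure_induction with
      | mem x hx => exact hmem x (Set.mem_insert_of_mem _ hx)
      | one => exact hmem 1 (Set.mem_insert _ _)
      | mul x y _ _ ihx ihy => rw [hadd x y, ihx, ihy, add_zero]
      | inv x _ ihx =>
        have h1 : L 1 = 0 := hmem 1 (Set.mem_insert _ _)
        have := hadd x x⁻¹
        rw [mul_inv_cancel, h1, ihx] at this
        linarith
    · rintro rfl
      rw [qmNorm_eq]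
      have hb : bSup S (0 : Γ → ℝ) = 0 :=
        le_antisymm (bSup_le le_rfl (fun s _ => by simp)) (bSup_nonneg S 0)
      have hd : qmDefect (0 : Γ → ℝ) = 0 :=
        le_antisymm (qmDefect_le le_rfl (fun a b => by simp)) (qmDefect_nonneg 0)
      rw [hb, hd, add_zero]
  · -- triangle inequality
    intro L L' hL hL'
    rw [qmNorm_eq, qmNorm_eq, qmNorm_eq]
    have h1 : bSup S (L + L') ≤ bSup S L + bSup S L' := by
      refine bSup_le (add_nonneg (bSup_nonneg S L) (bSup_nonneg S L')) fun s hs => ?_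
      calc |(L + L') s| ≤ |L s| + |L' s| := abs_add_le _ _
        _ ≤ bSup S L + bSup S L' := add_le_add (le_bSup L hs) (le_bSup L' hs)
    have h2 : qmDefect (L + L') ≤ qmDefect L + qmDefect L' := by
      refine qmDefect_le (add_nonneg (qmDefect_nonneg L) (qmDefect_nonneg L')) fun a b => ?_
      have heq : (L + L') (a * b) - (L + L') a - (L + L') b
          = (L (a * b) - L a - L b) + (L' (a * b) - L' a - L' b) := by
        simp only [Pi.add_apply]; ring
      rw [heq]
      exact (abs_add_le _ _).trans (add_le_add (abs_le_qmDefect hL a b) (abs_le_qmDefect hL' a b))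
    linarith
  · -- homogeneity
    intro c L _
    rw [qmNorm_eq, qmNorm_eq, mul_add]
    have h1 : bSup S (c • L) = |c| * bSup S L := by
      unfold bSup
      rw [Real.mul_iSup_of_nonneg (abs_nonneg c)]
      refine iSup_congr fun s => ?_
      rw [Real.mul_iSup_of_nonneg (abs_nonneg c)]
      exact iSup_congr fun _ => by simp [abs_mul]
    have h2 : qmDefect (c • L) = |c| * qmDefect L := by
      unfold qmDefect
      rw [Real.mul_iSup_of_nonneg (abs_nonneg c)]
      refine iSup_congr fun p => ?_
      simp only [Pi.smul_apply, smul_eq_mul, ← mul_sub, abs_mul]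
    rw [h1, h2]
  · -- completeness
    intro Lseq hqm hC
    have hcau : ∀ g : Γ, CauchySeq fun k => Lseq k g := by
      intro g
      rw [Metric.cauchySeq_iff]
      intro ε hε
      obtain ⟨cg, hcg0, hcg⟩ := point_bound S hS g
      obtain ⟨N, hN⟩ := hC (ε / (2 * (cg + 1))) (by positivity)
      refine ⟨N, fun j hj k hk => ?_⟩
      have hsub : IsQuasimorphism (Lseq j - Lseq k) := (hqm j).sub (hqm k)
      have h1 : |Lseq j g - Lseq k g| ≤ cg * (ε / (2 * (cg + 1))) := by
        have h := hcg (Lseq j - Lseq k) hsub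
        simp only [Pi.sub_apply] at h
        exact h.trans (mul_le_mul_of_nonneg_left (hN j k hj hk) hcg0)
      have h2 : cg * (ε / (2 * (cg + 1))) < ε := by
        rw [mul_div_assoc']
        rw [div_lt_iff₀ (by positivity)]
        nlinarith
      rw [Real.dist_eq]
      exact h1.trans_lt h2
    choose L hL using fun g => cauchySeq_tendsto_of_complete (hcau g)
    have key : ∀ ε : ℝ, 0 < ε → ∃ N : ℕ, ∀ j : ℕ, N ≤ j →
        (∀ a b : Γ, |(Lseq j - L) (a * b) - (Lseq j - L) a - (Lseq j - L) b| ≤ ε) ∧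
        (∀ s ∈ insert (1 : Γ) (S : Set Γ), |(Lseq j - L) s| ≤ ε) := by
      intro ε hε
      obtain ⟨N, hN⟩ := hC ε hε
      refine ⟨N, fun j hj => ⟨fun a b => ?_, fun s hs => ?_⟩⟩
      · have ht : Filter.Tendsto
            (fun k => |(Lseq j - Lseq k) (a * b) - (Lseq j - Lseq k) a - (Lseq j - Lseq k) b|)
            Filter.atTop
            (nhds |(Lseq j - L) (a * b) - (Lseq j - L) a - (Lseq j - L) b|) := by
          simp only [Pi.sub_apply]
          exact (((tendsto_const_nhds.sub (hL (a * b))).sub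
            (tendsto_const_nhds.sub (hL a))).sub (tendsto_const_nhds.sub (hL b))).abs
        refine le_of_tendsto ht ?_
        filter_upwards [Filter.eventually_ge_atTop N] with k hk
        have hsub : IsQuasimorphism (Lseq j - Lseq k) := (hqm j).sub (hqm k)
        exact (abs_le_qmDefect hsub _ _).trans
          ((qmDefect_le_qmNorm S _).trans (hN j k hj hk))
      · have ht : Filter.Tendsto (fun k => |(Lseq j - Lseq k) s|) Filter.atTop
            (nhds |(Lseq j - L) s|) := by
          simp only [Pi.sub_apply]
          exact (tendsto_const_nhds.sub (hL s)).abs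
        refine le_of_tendsto ht ?_
        filter_upwards [Filter.eventually_ge_atTop N] with k hk
        exact (le_bSup _ hs).trans ((bSup_le_qmNorm S _).trans (hN j k hj hk))
    refine ⟨L, ?_, ?_⟩
    · obtain ⟨N, hkey⟩ := key 1 one_pos
      obtain ⟨hA, _⟩ := hkey N le_rfl
      obtain ⟨C, hCN⟩ := hqm N
      refine ⟨C + 1, fun a b => ?_⟩
      have h2 := hA a b
      simp only [Pi.sub_apply] at h2
      have heq : L (a * b) - L a - L b
          = (Lseq N (a * b) - Lseq N a - Lseq N b)
            - (Lseq N (a * b) - L (a * b) - (Lseq N a - L a) - (Lseq N b - L b)) := by ring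
      calc |L (a * b) - L a - L b|
          = |(Lseq N (a * b) - Lseq N a - Lseq N b)
            - (Lseq N (a * b) - L (a * b) - (Lseq N a - L a) - (Lseq N b - L b))| :=
            congrArg _root_.abs heq
        _ ≤ _ := (abs_sub _ _).trans (add_le_add (hCN a b) h2)
    · rw [Metric.tendsto_atTop]
      intro ε hε
      obtain ⟨N, hkey⟩ := key (ε / 4) (by positivity)
      refine ⟨N, fun k hk => ?_⟩
      obtain ⟨hA, hB⟩ := hkey k hk
      have hD : qmDefect (Lseq k - L) ≤ ε / 4 := qmDefect_le (by positivity) hA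
      have hbs : bSup S (Lseq k - L) ≤ ε / 4 := bSup_le (by positivity) hB
      rw [Real.dist_eq, sub_zero, abs_of_nonneg (qmNorm_nonneg S _), qmNorm_eq]
      linarith
end

section
/- Let Σ be a subshift of finite type with shift τ, fix a full-support invariant probability μ, and for ε = constant, define Bow_μ(Σ) as the space of μ-weak Bowen functions φ ∈ L^∞(μ) (there exists C > 0 such that for μ-a.e. x, y with y ∈ [x]_n one has |S_n φ(x) - S_n φ(y)| ≤ C for all n), with norm ⦀φ⦀_B = ‖φ‖_{L^∞} + ‖φ‖_B where ‖φ‖_B = inf C. Then (Bow_μ(Σ), ⦀·⦀_B) is a Banach space. -/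
open MeasureTheory

variable {A : Type*} [MeasurableSpace A]

/-- Admissibility of a sequence with respect to the transition relation `R`. -/
def Adm (R : A → A → Prop) (x : ℕ → A) : Prop := ∀ n : ℕ, R (x n) (x (n + 1))

/-- The subshift of finite type determined by `R`. -/
def SFT (R : A → A → Prop) : Type _ := {x : ℕ → A // Adm R x}

instance (R : A → A → Prop) : MeasurableSpace (SFT R) :=
  Subtype.instMeasurableSpace

/-- The shift map on the subshift. -/
def shftS (R : A → A → Prop) : SFT R → SFT R :=
  fun x => ⟨fun n => x.1 (n + 1), fun n => x.2 (n + 1)⟩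

/-- Birkhoff sums on the subshift. -/
def birk (R : A → A → Prop) (φ : SFT R → ℝ) (n : ℕ) (x : SFT R) : ℝ :=
  ∑ k ∈ Finset.range n, φ ((shftS R)^[k] x)

/-- `C` is a weak Bowen constant for `φ`: for `μ⊗μ`-a.e. pair `(x,y)` and every `n`,
if `x` and `y` agree in coordinates `< n` then `|S_n φ(x) - S_n φ(y)| ≤ C`. -/
def IsBowenConst (R : A → A → Prop) (μ : Measure (SFT R)) (φ : SFT R → ℝ) (C : ℝ) : Prop :=
  ∀ᵐ p ∂(μ.prod μ), ∀ n : ℕ, 1 ≤ n → (∀ i : ℕ, i < n → p.1.1 i = p.2.1 i) →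
    |birk R φ n p.1 - birk R φ n p.2| ≤ C

/-- A `μ`-weak Bowen function: essentially bounded with some weak Bowen constant. -/
def MemBow (R : A → A → Prop) (μ : Measure (SFT R)) (φ : SFT R → ℝ) : Prop :=
  MemLp φ ⊤ μ ∧ ∃ C : ℝ, 0 ≤ C ∧ IsBowenConst R μ φ C

/-- The Bowen seminorm `‖φ‖_B = inf C`. -/
noncomputable def bowenSemi (R : A → A → Prop) (μ : Measure (SFT R)) (φ : SFT R → ℝ) : ℝ :=
  sInf {C : ℝ | 0 ≤ C ∧ IsBowenConst R μ φ C}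

/-- The Bowen norm `⦀φ⦀_B = ‖φ‖_{L^∞} + ‖φ‖_B`. -/
noncomputable def bowenNorm (R : A → A → Prop) (μ : Measure (SFT R)) (φ : SFT R → ℝ) : ℝ :=
  (eLpNorm φ ⊤ μ).toReal + bowenSemi R μ φ

section Aux

set_option linter.unusedSectionVars false

variable {R : A → A → Prop} {μ : Measure (SFT R)} {φ ψ : SFT R → ℝ} {C D : ℝ}

lemma birk_add_app (f g : SFT R → ℝ) (n : ℕ) (x : SFT R) :
    birk R (f + g) n x = birk R f n x + birk R g n x := by
  simp [birk, Finset.sum_add_distrib]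

lemma birk_sub_app (f g : SFT R → ℝ) (n : ℕ) (x : SFT R) :
    birk R (f - g) n x = birk R f n x - birk R g n x := by
  simp [birk, Finset.sum_sub_distrib]

lemma birk_smul_app (c : ℝ) (f : SFT R → ℝ) (n : ℕ) (x : SFT R) :
    birk R (c • f) n x = c * birk R f n x := by
  simp [birk, Finset.mul_sum]

lemma bset_bddBelow : BddBelow {C : ℝ | 0 ≤ C ∧ IsBowenConst R μ φ C} :=
  ⟨0, fun _ hx => hx.1⟩

lemma bowenSemi_nonneg : 0 ≤ bowenSemi R μ φ :=
  Real.sInf_nonneg fun _ hx => hx.1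

lemma bowenSemi_le (h0 : 0 ≤ C) (hC : IsBowenConst R μ φ C) : bowenSemi R μ φ ≤ C :=
  csInf_le bset_bddBelow ⟨h0, hC⟩

lemma IsBowenConst.mono (h : IsBowenConst R μ φ C) (hCD : C ≤ D) : IsBowenConst R μ φ D :=
  Filter.Eventually.mono h fun _ hp n hn hag => (hp n hn hag).trans hCD

lemma IsBowenConst.add (h1 : IsBowenConst R μ φ C) (h2 : IsBowenConst R μ ψ D) :
    IsBowenConst R μ (φ + ψ) (C + D) := by
  filter_upwards [h1, h2] with p hp1 hp2 n hn hag
  rw [birk_add_app, birk_add_app]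
  calc |birk R φ n p.1 + birk R ψ n p.1 - (birk R φ n p.2 + birk R ψ n p.2)|
      = |(birk R φ n p.1 - birk R φ n p.2) + (birk R ψ n p.1 - birk R ψ n p.2)| := by ring_nf
    _ ≤ |birk R φ n p.1 - birk R φ n p.2| + |birk R ψ n p.1 - birk R ψ n p.2| := abs_add_le _ _
    _ ≤ C + D := add_le_add (hp1 n hn hag) (hp2 n hn hag)

lemma IsBowenConst.sub (h1 : IsBowenConst R μ φ C) (h2 : IsBowenConst R μ ψ D) :
    IsBowenConst R μ (φ - ψ) (C + D) := by
  filter_upwards [h1, h2] with p hp1 hp2 n hn hag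
  rw [birk_sub_app, birk_sub_app]
  calc |birk R φ n p.1 - birk R ψ n p.1 - (birk R φ n p.2 - birk R ψ n p.2)|
      = |(birk R φ n p.1 - birk R φ n p.2) - (birk R ψ n p.1 - birk R ψ n p.2)| := by ring_nf
    _ ≤ |birk R φ n p.1 - birk R φ n p.2| + |birk R ψ n p.1 - birk R ψ n p.2| := abs_sub _ _
    _ ≤ C + D := add_le_add (hp1 n hn hag) (hp2 n hn hag)

lemma IsBowenConst.smul (c : ℝ) (h : IsBowenConst R μ φ C) :
    IsBowenConst R μ (c • φ) (|c| * C) := by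
  filter_upwards [h] with p hp n hn hag
  rw [birk_smul_app, birk_smul_app, ← mul_sub, abs_mul]
  exact mul_le_mul_of_nonneg_left (hp n hn hag) (abs_nonneg c)

/-- The infimum of the Bowen constants is itself a Bowen constant. -/
lemma isBowenConst_bowenSemi (h : ∃ C : ℝ, 0 ≤ C ∧ IsBowenConst R μ φ C) :
    IsBowenConst R μ φ (bowenSemi R μ φ) := by
  obtain ⟨C0, hC0⟩ := h
  have hne : Set.Nonempty {C : ℝ | 0 ≤ C ∧ IsBowenConst R μ φ C} := ⟨C0, hC0⟩
  have key : ∀ m : ℕ, ∃ C : ℝ, (0 ≤ C ∧ IsBowenConst R μ φ C) ∧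
      C < bowenSemi R μ φ + 1 / (m + 1) := by
    intro m
    obtain ⟨a, ha, hlt⟩ := Real.lt_sInf_add_pos hne (ε := 1 / (m + 1)) (by positivity)
    exact ⟨a, ha, hlt⟩
  choose Cm hmem hlt using key
  have hall : ∀ᵐ p ∂(μ.prod μ), ∀ m : ℕ, ∀ n : ℕ, 1 ≤ n →
      (∀ i : ℕ, i < n → p.1.1 i = p.2.1 i) →
      |birk R φ n p.1 - birk R φ n p.2| ≤ Cm m :=
    ae_all_iff.2 fun m => (hmem m).2
  filter_upwards [hall] with p hp n hn hag
  by_contra hcon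
  push_neg at hcon
  obtain ⟨m, hm⟩ := exists_nat_one_div_lt (sub_pos.2 hcon)
  have h1 := hp m n hn hag
  have h2 := hlt m
  linarith

lemma ae_pair {α : Type*} [MeasurableSpace α] {μ : Measure α} [SFinite μ] {Q : α → Prop}
    (h : ∀ᵐ x ∂μ, Q x) : ∀ᵐ p ∂(μ.prod μ), Q p.1 ∧ Q p.2 :=
  (Measure.quasiMeasurePreserving_fst.ae h).and (Measure.quasiMeasurePreserving_snd.ae h)

lemma ae_iterate (hinv : MeasurePreserving (shftS R) μ μ) {P : SFT R → Prop}
    (h : ∀ᵐ x ∂μ, P x) : ∀ᵐ x ∂μ, ∀ i : ℕ, P ((shftS R)^[i] x) :=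
  ae_all_iff.2 fun i => (hinv.iterate i).quasiMeasurePreserving.ae h

lemma bowenSemi_smul_le (c : ℝ)
    (hne : Set.Nonempty {C : ℝ | 0 ≤ C ∧ IsBowenConst R μ φ C}) :
    bowenSemi R μ (c • φ) ≤ |c| * bowenSemi R μ φ := by
  have step : ∀ C ∈ {C : ℝ | 0 ≤ C ∧ IsBowenConst R μ φ C},
      bowenSemi R μ (c • φ) ≤ |c| * C := fun C hC =>
    bowenSemi_le (mul_nonneg (abs_nonneg c) hC.1) (hC.2.smul c)
  rcases eq_or_ne c 0 with hc | hc
  · obtain ⟨C, hC⟩ := hne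
    have := step C hC
    have hsn := bowenSemi_nonneg (R := R) (μ := μ) (φ := φ)
    simp only [hc, abs_zero, zero_mul] at this ⊢
    exact this
  · have hpos : 0 < |c| := abs_pos.2 hc
    have hdiv : bowenSemi R μ (c • φ) / |c| ≤ bowenSemi R μ φ := by
      refine le_csInf hne fun C hC => ?_
      rw [div_le_iff₀ hpos]
      calc bowenSemi R μ (c • φ) ≤ |c| * C := step C hC
        _ = C * |c| := mul_comm _ _
    calc bowenSemi R μ (c • φ) = |c| * (bowenSemi R μ (c • φ) / |c|) := by
          field_simp
      _ ≤ |c| * bowenSemi R μ φ := mul_le_mul_of_nonneg_left hdiv hpos.le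

end Aux

/-- The space of `μ`-weak Bowen functions on a subshift of finite type, with a fully
supported invariant probability `μ` and the norm `⦀φ⦀_B = ‖φ‖_{L^∞} + ‖φ‖_B`, is a
Banach space: the norm is definite (up to `μ`-a.e. equality), subadditive,
absolutely homogeneous, and the space is complete. -/
theorem weak_bowen_banach (R : A → A → Prop) (μ : Measure (SFT R))
    [IsProbabilityMeasure μ] (hinv : MeasurePreserving (shftS R) μ μ)
    (hfull : ∀ (n : ℕ) (w : Fin n → A),
      ({x : SFT R | ∀ i : Fin n, x.1 (i : ℕ) = w i}).Nonempty →
      0 < μ {x : SFT R | ∀ i : Fin n, x.1 (i : ℕ) = w i}) :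
    (∀ φ : SFT R → ℝ, MemBow R μ φ → (bowenNorm R μ φ = 0 ↔ φ =ᵐ[μ] 0)) ∧
    (∀ φ ψ : SFT R → ℝ, MemBow R μ φ → MemBow R μ ψ →
      MemBow R μ (φ + ψ) ∧
      bowenNorm R μ (φ + ψ) ≤ bowenNorm R μ φ + bowenNorm R μ ψ) ∧
    (∀ (c : ℝ) (φ : SFT R → ℝ), MemBow R μ φ →
      bowenNorm R μ (c • φ) = |c| * bowenNorm R μ φ) ∧
    (∀ φseq : ℕ → SFT R → ℝ, (∀ k, MemBow R μ (φseq k)) →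
      (∀ ε : ℝ, 0 < ε → ∃ N : ℕ, ∀ j k : ℕ, N ≤ j → N ≤ k →
        bowenNorm R μ (φseq j - φseq k) ≤ ε) →
      ∃ φ : SFT R → ℝ, MemBow R μ φ ∧
        Filter.Tendsto (fun k => bowenNorm R μ (φseq k - φ)) Filter.atTop (nhds 0)) := by
  refine ⟨?_, ?_, ?_, ?_⟩
  · -- definiteness
    intro φ hφ
    constructor
    · intro h
      have h2 := bowenSemi_nonneg (R := R) (μ := μ) (φ := φ)
      have h1 : (0:ℝ) ≤ (eLpNorm φ ⊤ μ).toReal := ENNReal.toReal_nonneg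
      have h3 : (eLpNorm φ ⊤ μ).toReal = 0 := by
        unfold bowenNorm at h; linarith
      have h4 : eLpNorm φ ⊤ μ = 0 := by
        rcases (ENNReal.toReal_eq_zero_iff _).1 h3 with h | h
        · exact h
        · exact absurd h hφ.1.eLpNorm_ne_top
      exact (eLpNorm_eq_zero_iff hφ.1.aestronglyMeasurable (by simp)).1 h4
    · intro h
      have he : eLpNorm φ ⊤ μ = 0 :=
        (eLpNorm_eq_zero_iff hφ.1.aestronglyMeasurable (by simp)).2 h
      have h0 : ∀ᵐ x ∂μ, φ x = 0 := h.mono fun x hx => hx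
      have hit : ∀ᵐ x ∂μ, ∀ i : ℕ, φ ((shftS R)^[i] x) = 0 := ae_iterate hinv h0
      have hb : IsBowenConst R μ φ 0 := by
        filter_upwards [ae_pair (μ := μ) hit] with p hp n hn hag
        have e1 : birk R φ n p.1 = 0 := Finset.sum_eq_zero fun i _ => hp.1 i
        have e2 : birk R φ n p.2 = 0 := Finset.sum_eq_zero fun i _ => hp.2 i
        simp [e1, e2]
      have hs : bowenSemi R μ φ = 0 :=
        le_antisymm (bowenSemi_le le_rfl hb) bowenSemi_nonneg
      simp [bowenNorm, he, hs]
  · -- subadditivity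
    intro φ ψ hφ hψ
    obtain ⟨hφ1, C, hC0, hC⟩ := hφ
    obtain ⟨hψ1, D, hD0, hD⟩ := hψ
    have hmem : MemBow R μ (φ + ψ) := ⟨hφ1.add hψ1, C + D, by linarith, hC.add hD⟩
    refine ⟨hmem, ?_⟩
    have hL : (eLpNorm (φ + ψ) ⊤ μ).toReal ≤
        (eLpNorm φ ⊤ μ).toReal + (eLpNorm ψ ⊤ μ).toReal := by
      have h1 := eLpNorm_add_le hφ1.aestronglyMeasurable hψ1.aestronglyMeasurable
        (le_top : (1:ENNReal) ≤ ⊤)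
      have h2 : (eLpNorm (φ + ψ) ⊤ μ).toReal ≤ (eLpNorm φ ⊤ μ + eLpNorm ψ ⊤ μ).toReal :=
        ENNReal.toReal_mono
          (ENNReal.add_ne_top.2 ⟨hφ1.eLpNorm_ne_top, hψ1.eLpNorm_ne_top⟩) h1
      rwa [ENNReal.toReal_add hφ1.eLpNorm_ne_top hψ1.eLpNorm_ne_top] at h2
    have hS : bowenSemi R μ (φ + ψ) ≤ bowenSemi R μ φ + bowenSemi R μ ψ := by
      have step : ∀ C' ∈ {C' : ℝ | 0 ≤ C' ∧ IsBowenConst R μ φ C'},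
          ∀ D' ∈ {D' : ℝ | 0 ≤ D' ∧ IsBowenConst R μ ψ D'},
          bowenSemi R μ (φ + ψ) ≤ C' + D' := fun C' hC' D' hD' =>
        bowenSemi_le (add_nonneg hC'.1 hD'.1) (hC'.2.add hD'.2)
      have h1 : ∀ D' ∈ {D' : ℝ | 0 ≤ D' ∧ IsBowenConst R μ ψ D'},
          bowenSemi R μ (φ + ψ) - D' ≤ bowenSemi R μ φ := by
        intro D' hD'
        refine le_csInf ⟨C, hC0, hC⟩ fun C' hC' => ?_
        have := step C' hC' D' hD'
        linarith
      have h2 : bowenSemi R μ (φ + ψ) - bowenSemi R μ φ ≤ bowenSemi R μ ψ := by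
        refine le_csInf ⟨D, hD0, hD⟩ fun D' hD' => ?_
        have := h1 D' hD'
        linarith
      linarith
    unfold bowenNorm
    linarith
  · -- homogeneity
    intro c φ hφ
    obtain ⟨hφ1, C, hC0, hC⟩ := hφ
    rcases eq_or_ne c 0 with hc | hc
    · subst hc
      have hz : (0:ℝ) • φ = 0 := zero_smul ℝ φ
      have hb0 : IsBowenConst R μ (0 : SFT R → ℝ) 0 := by
        refine Filter.Eventually.of_forall fun p n hn hag => ?_
        simp [birk]
      have hs : bowenSemi R μ (0 : SFT R → ℝ) = 0 :=
        le_antisymm (bowenSemi_le le_rfl hb0) bowenSemi_nonneg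
      rw [hz]
      simp [bowenNorm, hs, eLpNorm_zero]
    · have hL : (eLpNorm (c • φ) ⊤ μ).toReal = |c| * (eLpNorm φ ⊤ μ).toReal := by
        rw [eLpNorm_const_smul, ENNReal.toReal_mul]
        congr 1
      have hneφ : Set.Nonempty {C' : ℝ | 0 ≤ C' ∧ IsBowenConst R μ φ C'} := ⟨C, hC0, hC⟩
      have h1 := bowenSemi_smul_le (μ := μ) c hneφ
      have hnecφ : Set.Nonempty {C' : ℝ | 0 ≤ C' ∧ IsBowenConst R μ (c • φ) C'} :=
        ⟨|c| * C, mul_nonneg (abs_nonneg c) hC0, hC.smul c⟩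
      have h2 := bowenSemi_smul_le (μ := μ) c⁻¹ hnecφ
      rw [inv_smul_smul₀ hc] at h2
      have hpos : 0 < |c| := abs_pos.2 hc
      have h3 : |c| * bowenSemi R μ φ ≤ bowenSemi R μ (c • φ) := by
        rw [abs_inv] at h2
        calc |c| * bowenSemi R μ φ ≤ |c| * (|c|⁻¹ * bowenSemi R μ (c • φ)) :=
              mul_le_mul_of_nonneg_left h2 hpos.le
          _ = bowenSemi R μ (c • φ) := by field_simp
      have hS : bowenSemi R μ (c • φ) = |c| * bowenSemi R μ φ := le_antisymm h1 h3
      unfold bowenNorm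
      rw [hL, hS]
      ring
  · -- completeness
    intro φseq hmem hc
    have hM : ∀ m : ℕ, ∃ N : ℕ, ∀ j k : ℕ, N ≤ j → N ≤ k →
        bowenNorm R μ (φseq j - φseq k) ≤ 1 / (m + 1) :=
      fun m => hc _ (by positivity)
    choose N hN using hM
    have hmemd : ∀ j k : ℕ, MemBow R μ (φseq j - φseq k) := by
      intro j k
      obtain ⟨h1, C, hC0, hC⟩ := hmem j
      obtain ⟨h2, D, hD0, hD⟩ := hmem k
      exact ⟨h1.sub h2, C + D, by linarith, hC.sub hD⟩
    have hLp : ∀ m j k : ℕ, N m ≤ j → N m ≤ k →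
        ∀ᵐ x ∂μ, |φseq j x - φseq k x| ≤ 1 / (m + 1) := by
      intro m j k hj hk
      have h1 : (eLpNorm (φseq j - φseq k) ⊤ μ).toReal ≤ 1 / (m + 1) := by
        have h := hN m j k hj hk
        have h2 := bowenSemi_nonneg (R := R) (μ := μ) (φ := φseq j - φseq k)
        unfold bowenNorm at h
        linarith
      have h3 : eLpNorm (φseq j - φseq k) ⊤ μ ≤ ENNReal.ofReal (1 / (m + 1)) :=
        (ENNReal.le_ofReal_iff_toReal_le (hmemd j k).1.eLpNorm_ne_top (by positivity)).2 h1
      rw [eLpNorm_exponent_top] at h3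
      filter_upwards [ae_le_eLpNormEssSup (f := φseq j - φseq k) (μ := μ)] with x hx
      have h4 : ‖(φseq j - φseq k) x‖ₑ ≤ ENNReal.ofReal (1 / (m + 1)) :=
        hx.trans h3
      rw [← ofReal_norm,
        ENNReal.ofReal_le_ofReal_iff (by positivity), Real.norm_eq_abs,
        Pi.sub_apply] at h4
      exact h4
    have hG : ∀ᵐ x ∂μ, ∀ m j k : ℕ, N m ≤ j → N m ≤ k →
        |φseq j x - φseq k x| ≤ 1 / (m + 1) := by
      rw [ae_all_iff]; intro m
      rw [ae_all_iff]; intro j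
      rw [ae_all_iff]; intro k
      by_cases hj : N m ≤ j
      · by_cases hk : N m ≤ k
        · exact (hLp m j k hj hk).mono fun x hx _ _ => hx
        · exact Filter.Eventually.of_forall fun x _ hk' => absurd hk' hk
      · exact Filter.Eventually.of_forall fun x hj' => absurd hj' hj
    have hCau : ∀ x : SFT R,
        (∀ m j k : ℕ, N m ≤ j → N m ≤ k → |φseq j x - φseq k x| ≤ 1 / (m + 1)) →
        ∃ l : ℝ, Filter.Tendsto (fun n => φseq n x) Filter.atTop (nhds l) := by
      intro x hx
      have : CauchySeq fun n => φseq n x := by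
        rw [Metric.cauchySeq_iff']
        intro ε hε
        obtain ⟨m, hm⟩ := exists_nat_one_div_lt hε
        refine ⟨N m, fun n hn => lt_of_le_of_lt ?_ hm⟩
        simpa [Real.dist_eq] using hx m n (N m) hn le_rfl
      exact cauchySeq_tendsto_of_complete this
    set φ : SFT R → ℝ := fun x => Filter.limUnder Filter.atTop (fun n => φseq n x) with hφdef
    have hconv : ∀ᵐ x ∂μ, Filter.Tendsto (fun n => φseq n x) Filter.atTop (nhds (φ x)) := by
      filter_upwards [hG] with x hx
      obtain ⟨l, hl⟩ := hCau x hx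
      have hx' : φ x = l := by rw [hφdef]; exact hl.limUnder_eq
      rw [hx']; exact hl
    have hφmeas : AEStronglyMeasurable φ μ :=
      aestronglyMeasurable_of_tendsto_ae Filter.atTop
        (fun n => (hmem n).1.aestronglyMeasurable) hconv
    have hclose : ∀ m j : ℕ, N m ≤ j → ∀ᵐ x ∂μ, |φseq j x - φ x| ≤ 1 / (m + 1) := by
      intro m j hj
      filter_upwards [hG, hconv] with x hx hcx
      have ht : Filter.Tendsto (fun k => |φseq j x - φseq k x|) Filter.atTop
          (nhds |φseq j x - φ x|) := (tendsto_const_nhds.sub hcx).abs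
      refine le_of_tendsto ht ?_
      filter_upwards [Filter.eventually_ge_atTop (N m)] with k hk
      exact hx m j k hj hk
    have hLpdiff : ∀ m j : ℕ, N m ≤ j → MemLp (φseq j - φ) ⊤ μ := by
      intro m j hj
      refine memLp_top_of_bound ((hmem j).1.aestronglyMeasurable.sub hφmeas)
        (1 / (m + 1)) ?_
      filter_upwards [hclose m j hj] with x hx
      simpa [Real.norm_eq_abs, Pi.sub_apply] using hx
    have hφLp : MemLp φ ⊤ μ := by
      have h1 := hLpdiff 0 (N 0) le_rfl
      have h2 : φseq (N 0) - (φseq (N 0) - φ) = φ := sub_sub_cancel _ _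
      rw [← h2]
      exact (hmem (N 0)).1.sub h1
    have hshift : ∀ᵐ x ∂μ, ∀ i : ℕ,
        Filter.Tendsto (fun n => φseq n ((shftS R)^[i] x)) Filter.atTop
          (nhds (φ ((shftS R)^[i] x))) :=
      ae_iterate hinv hconv
    have hBC : ∀ m j : ℕ, N m ≤ j → IsBowenConst R μ (φseq j - φ) (1 / (m + 1)) := by
      intro m j hj
      have hk : ∀ k : ℕ, N m ≤ k → IsBowenConst R μ (φseq j - φseq k) (1 / (m + 1)) := by
        intro k hk
        have h1 := hN m j k hj hk
        have h2 : bowenSemi R μ (φseq j - φseq k) ≤ 1 / (m + 1) := by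
          have h3 : (0:ℝ) ≤ (eLpNorm (φseq j - φseq k) ⊤ μ).toReal := ENNReal.toReal_nonneg
          unfold bowenNorm at h1
          linarith
        exact (isBowenConst_bowenSemi (hmemd j k).2).mono h2
      have hall : ∀ᵐ p ∂(μ.prod μ), ∀ k : ℕ, N m ≤ k → ∀ n : ℕ, 1 ≤ n →
          (∀ i : ℕ, i < n → p.1.1 i = p.2.1 i) →
          |birk R (φseq j - φseq k) n p.1 - birk R (φseq j - φseq k) n p.2| ≤
            1 / (m + 1) := by
        rw [ae_all_iff]; intro k
        by_cases h : N m ≤ k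
        · exact Filter.Eventually.mono (hk k h) fun p hp _ => hp
        · exact Filter.Eventually.of_forall fun p h' => absurd h' h
      filter_upwards [hall, ae_pair (μ := μ) hshift] with p hp hcp n hn hag
      have T1 : ∀ x : SFT R,
          (∀ i : ℕ, Filter.Tendsto (fun n' => φseq n' ((shftS R)^[i] x)) Filter.atTop
            (nhds (φ ((shftS R)^[i] x)))) →
          Filter.Tendsto (fun k => birk R (φseq k) n x) Filter.atTop
            (nhds (birk R φ n x)) := by
        intro x hx
        unfold birk
        exact tendsto_finset_sum _ fun i _ => hx i
      have t1 := T1 p.1 hcp.1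
      have t2 := T1 p.2 hcp.2
      have tt : Filter.Tendsto
          (fun k => |birk R (φseq j - φseq k) n p.1 - birk R (φseq j - φseq k) n p.2|)
          Filter.atTop
          (nhds |birk R (φseq j - φ) n p.1 - birk R (φseq j - φ) n p.2|) := by
        simp only [birk_sub_app]
        exact ((tendsto_const_nhds.sub t1).sub (tendsto_const_nhds.sub t2)).abs
      refine le_of_tendsto tt ?_
      filter_upwards [Filter.eventually_ge_atTop (N m)] with k hk'
      exact hp k hk' n hn hag
    have hBowφ : MemBow R μ φ := by
      refine ⟨hφLp, ?_⟩
      obtain ⟨_, C, hC0, hC⟩ := hmem (N 0)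
      have h2 := hC.sub (hBC 0 (N 0) le_rfl)
      rw [sub_sub_cancel] at h2
      refine ⟨C + 1 / ((0:ℕ) + 1), ?_, h2⟩
      have : (0:ℝ) ≤ 1 / ((0:ℕ) + 1) := by positivity
      linarith
    refine ⟨φ, hBowφ, ?_⟩
    rw [Metric.tendsto_atTop]
    intro ε hε
    obtain ⟨m, hm⟩ := exists_nat_one_div_lt (half_pos hε)
    refine ⟨N m, fun k hk => ?_⟩
    have b1 : (eLpNorm (φseq k - φ) ⊤ μ).toReal ≤ 1 / (m + 1) := by
      have h3 : eLpNorm (φseq k - φ) ⊤ μ ≤ ENNReal.ofReal (1 / (m + 1)) := by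
        rw [eLpNorm_exponent_top]
        refine eLpNormEssSup_le_of_ae_bound (C := 1 / (m + 1)) ?_
        filter_upwards [hclose m k hk] with x hx
        simpa [Real.norm_eq_abs, Pi.sub_apply] using hx
      exact ENNReal.toReal_le_of_le_ofReal (by positivity) h3
    have b2 : bowenSemi R μ (φseq k - φ) ≤ 1 / (m + 1) :=
      bowenSemi_le (by positivity) (hBC m k hk)
    have hnn : (0:ℝ) ≤ bowenNorm R μ (φseq k - φ) :=
      add_nonneg ENNReal.toReal_nonneg bowenSemi_nonneg
    rw [Real.dist_eq, sub_zero, abs_of_nonneg hnn]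
    have hb : bowenNorm R μ (φseq k - φ) ≤ 2 * (1 / (m + 1)) := by
      unfold bowenNorm; linarith
    linarith
end
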